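/- Let A₁ and A₂ be disjoint closed subsets of M such that A₁ is a connected component of M. Then there exist disjoint compact subsets M₁ and M₂ of M such that A₁ ⊆ M₁, A₂ ⊆ M₂ and M = M₁ ∪ M₂. -/

import Mathlib

open Set Topology

/-- A map `G` is compact on `B` if it is continuous on `B` and maps bounded closed
subsets of the ambient space contained in `B` to relatively compact sets. -/
def IsCompactMapOn {E F : Type*} [NormedAddCommGroup E] [NormedSpace ℝ E]
    [NormedAddCommGroup F] [NormedSpace ℝ F] (G : E → F) (B : Set E) : Prop :=
  ContinuousOn G B ∧
    ∀ A : Set E, A ⊆ B → Bornology.IsBounded A → IsClosed A → IsCompact (closure (G '' A))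

variable {X : Type*} [NormedAddCommGroup X] [NormedSpace ℝ X]

/-- The nonlinear map `F(x, λ) = x - λ K x - H (x, λ)`. -/
noncomputable def Fmap (K : X →L[ℝ] X) (H : X × ℝ → X) : X × ℝ → X :=
  fun p => p.1 - p.2 • K p.1 - H p

open Classical in
/-- The map `h(x, λ) = ‖x‖⁻¹ H(x,λ)` for `x ≠ 0`, `0` otherwise. -/
noncomputable def hmap (H : X × ℝ → X) : X × ℝ → X :=
  fun p => if p.1 = 0 then 0 else ‖p.1‖⁻¹ • H p

/-- `μ` is a characteristic value of `K` if `μ⁻¹` is an eigenvalue of `K`. -/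
def CharVal (K : X →L[ℝ] X) (μ : ℝ) : Prop :=
  Module.End.HasEigenvalue (K : X →ₗ[ℝ] X) μ⁻¹

/-- The multiplicity of a characteristic value `μ`: the dimension of the generalized
eigenspace `⋃_k ker((μ⁻¹ • I - K)^k)` of `K` for the eigenvalue `μ⁻¹`. -/
noncomputable def charMult (K : X →L[ℝ] X) (μ : ℝ) : ℕ :=
  Module.finrank ℝ (Module.End.maxGenEigenspace (K : X →ₗ[ℝ] X) μ⁻¹)

/-- `𝔖(F)`: the closure in `Ω` of the set of non-trivial solutions of `F(x,λ) = 0`. -/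
def SolClosure (F : X × ℝ → X) (Ω : Set (X × ℝ)) : Set (X × ℝ) :=
  closure {p | p ∈ Ω ∧ F p = 0 ∧ p.1 ≠ 0} ∩ Ω

/-- `C_{λ₀}(F)`: the connected component of `(0, λ₀)` in `𝔖(F) ∪ {(0, λ₀)}`. -/
noncomputable def Ccomp (F : X × ℝ → X) (Ω : Set (X × ℝ)) (lam0 : ℝ) : Set (X × ℝ) :=
  connectedComponentIn (SolClosure F Ω ∪ {((0 : X), lam0)}) ((0 : X), lam0)

/-- `𝔛_{λ₀}(r) = {(x, μ) : ‖x‖ + |λ₀ - μ| < r}`. -/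
def ball0 (X : Type*) [NormedAddCommGroup X] (lam0 r : ℝ) : Set (X × ℝ) :=
  {p | ‖p.1‖ + |lam0 - p.2| < r}

/-- The cone `𝔠_y⁺` (for `σ = 1`) resp. `𝔠_y⁻` (for `σ = -1`):
`{(x, λ) : σ l(x) > y ‖x‖}`. -/
def cone (l : X →L[ℝ] ℝ) (σ y : ℝ) : Set (X × ℝ) :=
  {p | y * ‖p.1‖ < σ * l p.1}

/-- The cone `𝔠_y = {(x, λ) : |l(x)| > y ‖x‖}`. -/
def coneAbs (l : X →L[ℝ] ℝ) (y : ℝ) : Set (X × ℝ) :=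
  {p | y * ‖p.1‖ < |l p.1|}

/-- A branch of solutions of `F(x,λ) = 0` at `(0, λ₀)` in the direction of `σ v`
(where `σ = ±1`): a connected subset `Q` of `C_{λ₀}(F)` containing `(0, λ₀)` such that
for every `y ∈ (0,1)` there is `ε_y > 0` with
`∅ ≠ Q ∩ ∂𝔛_{λ₀}(ε) ⊆ 𝔠_y^σ` for all `0 < ε < ε_y`. -/
def IsBranch (F : X × ℝ → X) (Ω : Set (X × ℝ)) (lam0 : ℝ) (l : X →L[ℝ] ℝ) (σ : ℝ)
    (Q : Set (X × ℝ)) : Prop :=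
  Q ⊆ Ccomp F Ω lam0 ∧ IsPreconnected Q ∧ ((0 : X), lam0) ∈ Q ∧
    ∀ y ∈ Ioo (0 : ℝ) 1, ∃ εy > 0, ∀ ε, 0 < ε → ε < εy →
      (Q ∩ frontier (ball0 X lam0 ε)).Nonempty ∧
        Q ∩ frontier (ball0 X lam0 ε) ⊆ cone l σ y

/-- `C_{λ₀}^κ(F)` for `κ = σ = ±1`: the closure in `Ω` of the union of `{(0, λ₀)}` and
all branches of solutions in the direction of `σ v`. -/
noncomputable def Cdir (F : X × ℝ → X) (Ω : Set (X × ℝ)) (lam0 : ℝ) (l : X →L[ℝ] ℝ)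
    (σ : ℝ) : Set (X × ℝ) :=
  closure ({((0 : X), lam0)} ∪ ⋃₀ {Q | IsBranch F Ω lam0 l σ Q}) ∩ Ω

/-- `C_{λ₀,ε}^κ` for `κ = σ = ±1`: the connected component of `(0, λ₀)` in
`C_{λ₀}(F) \ (𝔛_{λ₀}(ε) ∩ 𝔠_y^{-κ})`. -/
noncomputable def Cloc (F : X × ℝ → X) (Ω : Set (X × ℝ)) (lam0 : ℝ) (l : X →L[ℝ] ℝ)
    (y σ ε : ℝ) : Set (X × ℝ) :=
  connectedComponentIn (Ccomp F Ω lam0 \ (ball0 X lam0 ε ∩ cone l (-σ) y)) ((0 : X), lam0)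


/-- Whyburn. In a compact metric space `M`, if `A₁` and `A₂` are
disjoint closed subsets with `A₁` a connected component of `M`, then `M` splits into
disjoint compact sets `M₁ ⊇ A₁` and `M₂ ⊇ A₂`. -/
theorem whyburn_separation
    {M : Type*} [MetricSpace M] [CompactSpace M]
    (A₁ A₂ : Set M) (h₁ : IsClosed A₁) (h₂ : IsClosed A₂) (hdisj : Disjoint A₁ A₂)
    (hcomp : ∃ x : M, connectedComponent x = A₁) :
    ∃ M₁ M₂ : Set M, IsCompact M₁ ∧ IsCompact M₂ ∧ Disjoint M₁ M₂ ∧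
      A₁ ⊆ M₁ ∧ A₂ ⊆ M₂ ∧ M₁ ∪ M₂ = Set.univ := by

  obtain ⟨x, hx⟩ := hcomp
  -- find a clopen set containing x, disjoint from A₂
  have hopen : IsOpen A₂ᶜ := h₂.isOpen_compl
  have hsub : connectedComponent x ⊆ A₂ᶜ := by
    rw [hx]; exact fun y hy hy2 => hdisj.le_bot ⟨hy, hy2⟩
  let N := { s : Set M // IsClopen s ∧ x ∈ s }
  have hNcl : ∀ s : N, IsClosed s.val := fun s => s.property.1.1
  have hdir : Directed (· ⊇ ·) fun s : N => s.val := by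
    rintro ⟨s, hs, hxs⟩ ⟨t, ht, hxt⟩
    exact ⟨⟨s ∩ t, hs.inter ht, ⟨hxs, hxt⟩⟩, Set.inter_subset_left, Set.inter_subset_right⟩
  have hiInter : (⋂ s : N, s.val) = connectedComponent x :=
    (connectedComponent_eq_iInter_isClopen x).symm
  have h_nhd : ∀ y ∈ ⋂ s : N, s.val, A₂ᶜ ∈ 𝓝 y := fun y hy => by
    rw [hiInter] at hy
    exact hopen.mem_nhds (hsub hy)
  have : Nonempty N := ⟨⟨Set.univ, isClopen_univ, Set.mem_univ x⟩⟩
  obtain ⟨⟨s, hs, hxs⟩, hsA⟩ := exists_subset_nhds_of_compactSpace hdir hNcl h_nhd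
  refine ⟨s, sᶜ, hs.1.isCompact, hs.compl.1.isCompact, disjoint_compl_right, ?_, ?_,
    Set.union_compl_self s⟩
  · rw [← hx]
    exact (connectedComponent_eq_iInter_isClopen x).trans_subset
      (Set.iInter_subset _ (⟨s, hs, hxs⟩ : N))
  · exact fun y hy hys => hsA hys hy
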